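/- A 2-dimensional F_{q^m}-linear code C = ⟨f_1, f_2⟩_{F_{q^m}} ⊆ L_{m,q}[x] is MRD (i.e., every nonzero element has rank at least m-1) if and only if the F_q-subspace U_{f_1,f_2} = {(f_1(x), f_2(x)) : x in F_{q^m}} of (F_{q^m})^2 is a scattered F_q-subspace of dimension m. -/
import Mathlib


variable (Fq Fqm : Type) [Field Fq] [Field Fqm] [Fintype Fq] [Fintype Fqm] [Algebra Fq Fqm]

/-- The q-polynomial `x ↦ x^(q^j)`, as an `F_q`-linear endomorphism of `F_{q^m}`. -/
noncomputable def qpow (j : ℕ) : Fqm →ₗ[Fq] Fqm where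
  toFun x := x ^ (Fintype.card Fq) ^ j
  map_add' x y := by
    haveI : CharP Fq (ringChar Fq) := ringChar.charP Fq
    obtain ⟨e, hp, hcard⟩ := FiniteField.card Fq (ringChar Fq)
    haveI : Fact (Nat.Prime (ringChar Fq)) := ⟨hp⟩
    haveI : CharP Fqm (ringChar Fq) :=
      charP_of_injective_algebraMap (algebraMap Fq Fqm).injective _
    simp only [hcard, ← pow_mul]
    exact add_pow_char_pow x y (ringChar Fq) (e * j)
  map_smul' c x := by
    simp only [Algebra.smul_def, RingHom.id_apply]
    rw [mul_pow, ← map_pow, FiniteField.pow_card_pow]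

open Module

/-- (Sheekey's criterion.) A 2-dimensional `F_{q^m}`-linear rank-metric code
`C = ⟨f₁, f₂⟩_{F_{q^m}} ⊆ L_{m,q}[x]` (with `f₁, f₂` linearly independent over `F_{q^m}`)
is MRD — i.e. every nonzero element of `C` has rank at least `m - 1` — if and only if
`U_{f₁,f₂} = {(f₁(x), f₂(x)) : x ∈ F_{q^m}}` is a scattered `F_q`-subspace of `F_{q^m}²`
of dimension `m` (scattered: it meets every 1-dimensional `F_{q^m}`-subspace in an
`F_q`-subspace of dimension at most 1). -/
theorem MRD_iff_scattered
    (m : ℕ) (hrank : Module.finrank Fq Fqm = m)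
    (f₁ f₂ : Fqm →ₗ[Fq] Fqm)
    (hind : LinearIndependent Fqm ![f₁, f₂]) :
    (∀ f ∈ Submodule.span Fqm {f₁, f₂}, f ≠ 0 →
        m - 1 ≤ Module.finrank Fq (LinearMap.range f))
    ↔
    (Module.finrank Fq (LinearMap.range (LinearMap.prod f₁ f₂)) = m ∧
      ∀ L : Submodule Fqm (Fqm × Fqm), Module.finrank Fqm L = 1 →
        Module.finrank Fq
          ((LinearMap.range (LinearMap.prod f₁ f₂) ⊓ Submodule.restrictScalars Fq L :
            Submodule Fq (Fqm × Fqm))) ≤ 1) := by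
  haveI : Module.Finite Fq Fqm := Module.Finite.of_finite
  set P := LinearMap.prod f₁ f₂ with hP
  have pairind : ∀ a b : Fqm, a • f₁ + b • f₂ = 0 → a = 0 ∧ b = 0 :=
    LinearIndependent.pair_iff.mp hind
  have happ : ∀ (a b : Fqm) (x : Fqm), (a • f₁ + b • f₂) x = a * f₁ x + b * f₂ x := by
    intro a b x
    simp [smul_eq_mul]
  have rn : ∀ g : Fqm →ₗ[Fq] Fqm,
      finrank Fq (LinearMap.range g) + finrank Fq (LinearMap.ker g) = m := by
    intro g
    rw [← hrank]
    exact LinearMap.finrank_range_add_finrank_ker g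
  have rnP : finrank Fq (LinearMap.range P) + finrank Fq (LinearMap.ker P) = m := by
    rw [← hrank]
    exact LinearMap.finrank_range_add_finrank_ker P
  constructor
  · intro hMRD
    -- step 1 : P is injective
    have hKbot : LinearMap.ker P = ⊥ := by
      by_contra hK
      obtain ⟨z, hzK, hz0⟩ := (Submodule.ne_bot_iff _).mp hK
      have hz1 : f₁ z = 0 ∧ f₂ z = 0 := by
        have : P z = 0 := hzK
        simpa [hP, LinearMap.prod_apply, Prod.ext_iff] using this
      have hf₁ : f₁ ≠ 0 := hind.ne_zero 0
      obtain ⟨x₀, hx₀⟩ := DFunLike.ne_iff.mp hf₁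
      simp only [LinearMap.zero_apply] at hx₀
      set f : Fqm →ₗ[Fq] Fqm := f₂ x₀ • f₁ + (-(f₁ x₀)) • f₂ with hf
      have hfne : f ≠ 0 := by
        intro h0
        exact hx₀ (by simpa using (pairind _ _ h0).2)
      have hfmem : f ∈ Submodule.span Fqm {f₁, f₂} :=
        Submodule.mem_span_pair.mpr ⟨_, _, rfl⟩
      have hrk := hMRD f hfmem hfne
      have hzker : z ∈ LinearMap.ker f := by
        simp [hf, happ, hz1.1, hz1.2]
      have hx₀ker : x₀ ∈ LinearMap.ker f := by
        simp only [LinearMap.mem_ker, hf, happ]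
        ring
      have hk1 : finrank Fq (LinearMap.ker f) ≤ 1 := by
        have := rn f; omega
      have hspan : Submodule.span Fq {z} = LinearMap.ker f := by
        refine Submodule.eq_of_le_of_finrank_le ?_ ?_
        · simpa [Submodule.span_le] using hzker
        · rw [finrank_span_singleton hz0]; exact hk1
      have : x₀ ∈ Submodule.span Fq {z} := hspan ▸ hx₀ker
      obtain ⟨c, rfl⟩ := Submodule.mem_span_singleton.mp this
      exact hx₀ (by rw [map_smul, hz1.1, smul_zero])
    constructor
    · rw [hKbot, finrank_bot] at rnP; omega
    · intro L hL
      have hLne : L ≠ ⊥ := by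
        intro h
        rw [h] at hL
        simp at hL
      obtain ⟨v, hvL, hv0⟩ := (Submodule.ne_bot_iff L).mp hLne
      have hLspan : Submodule.span Fqm {v} = L := by
        refine Submodule.eq_of_le_of_finrank_le ?_ ?_
        · simpa [Submodule.span_le] using hvL
        · rw [finrank_span_singleton hv0, hL]
      set f : Fqm →ₗ[Fq] Fqm := v.2 • f₁ + (-v.1) • f₂ with hf
      have hfne : f ≠ 0 := by
        intro h0
        obtain ⟨h1, h2⟩ := pairind _ _ h0
        exact hv0 (Prod.ext (by simpa using h2) h1)
      have hrk := hMRD f (Submodule.mem_span_pair.mpr ⟨_, _, rfl⟩) hfne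
      have hk1 : finrank Fq (LinearMap.ker f) ≤ 1 := by
        have := rn f; omega
      have hle : LinearMap.range P ⊓ Submodule.restrictScalars Fq L ≤
          Submodule.map P (LinearMap.ker f) := by
        rintro ⟨u, w⟩ ⟨⟨x, hx⟩, hw⟩
        have hw' : (u, w) ∈ Submodule.span Fqm {v} := by
          rw [hLspan]; exact hw
        obtain ⟨c, hc⟩ := Submodule.mem_span_singleton.mp hw'
        have hx1 : f₁ x = u ∧ f₂ x = w := by
          simpa [hP, LinearMap.prod_apply, Prod.ext_iff] using hx
        have hcu : c * v.1 = u := by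
          have := congrArg Prod.fst hc; simpa [smul_eq_mul] using this
        have hcw : c * v.2 = w := by
          have := congrArg Prod.snd hc; simpa [smul_eq_mul] using this
        refine ⟨x, ?_, hx⟩
        show x ∈ LinearMap.ker f
        rw [LinearMap.mem_ker, hf, happ, hx1.1, hx1.2, ← hcu, ← hcw]
        ring
      calc finrank Fq (LinearMap.range P ⊓ Submodule.restrictScalars Fq L :
              Submodule Fq (Fqm × Fqm))
          ≤ finrank Fq (Submodule.map P (LinearMap.ker f)) := Submodule.finrank_mono hle
        _ ≤ finrank Fq (LinearMap.ker f) := Submodule.finrank_map_le P _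
        _ ≤ 1 := hk1
  · rintro ⟨hdim, hsc⟩ f hmem hfne
    obtain ⟨a, b, hab⟩ := Submodule.mem_span_pair.mp hmem
    have habne : ¬(a = 0 ∧ b = 0) := by
      rintro ⟨rfl, rfl⟩
      exact hfne (by rw [← hab]; simp)
    have hPinj : Function.Injective P := by
      rw [← LinearMap.ker_eq_bot]
      have : finrank Fq (LinearMap.ker P) = 0 := by omega
      exact Submodule.finrank_eq_zero.mp this
    have hv0 : ((b, -a) : Fqm × Fqm) ≠ 0 := by
      intro h
      rw [Prod.ext_iff] at h
      exact habne ⟨by simpa using h.2, h.1⟩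
    have hL1 : finrank Fqm (Submodule.span Fqm {((b, -a) : Fqm × Fqm)}) = 1 :=
      finrank_span_singleton hv0
    have hbound := hsc _ hL1
    have hmaple : Submodule.map P (LinearMap.ker f) ≤
        LinearMap.range P ⊓ Submodule.restrictScalars Fq (Submodule.span Fqm {((b, -a) : Fqm × Fqm)}) := by
      rintro _ ⟨x, hxk, rfl⟩
      have hfx : a * f₁ x + b * f₂ x = 0 := by
        have : f x = 0 := hxk
        rw [← hab] at this
        rwa [happ] at this
      refine ⟨⟨x, rfl⟩, ?_⟩
      show P x ∈ Submodule.span Fqm {((b, -a) : Fqm × Fqm)}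
      rw [Submodule.mem_span_singleton]
      have hPx : P x = (f₁ x, f₂ x) := rfl
      by_cases ha : a = 0
      · have hb : b ≠ 0 := fun h => habne ⟨ha, h⟩
        have hv : f₂ x = 0 := by
          rw [ha, zero_mul, zero_add] at hfx
          exact (mul_eq_zero.mp hfx).resolve_left hb
        exact ⟨f₁ x * b⁻¹, by rw [hPx]; ext <;> simp [ha, hv] <;> field_simp⟩
      · refine ⟨-(f₂ x) * a⁻¹, ?_⟩
        rw [hPx]
        ext
        · show -(f₂ x) * a⁻¹ * b = f₁ x
          field_simp
          linear_combination -hfx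
        · show -(f₂ x) * a⁻¹ * (-a) = f₂ x
          field_simp
      done
    have hker : finrank Fq (LinearMap.ker f) ≤ 1 := by
      have heq : finrank Fq (LinearMap.ker f) = finrank Fq (Submodule.map P (LinearMap.ker f)) :=
        (Submodule.equivMapOfInjective P hPinj (LinearMap.ker f)).finrank_eq
      rw [heq]
      exact (Submodule.finrank_mono hmaple).trans hbound
    have := rn f
    omega
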